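/- (Lemma) Let f : 𝕋 → ℝ be continuous, even, with mean value zero and f(0) > 0, with Fourier coefficients satisfying f̂(k) ≥ 0 for all k ≠ 0 and ∑_{k∈ℤ} f̂(k) < ∞, and let (x_n)_{n≥1} be a greedy sequence for f with initial points x_1, …, x_M. Then ∫₀¹ |∑_{k=1}^{n} f(x − x_k)| dx ≤ 2·f(0) holds for infinitely many n. -/

import Mathlib

open MeasureTheory Filter Complex
open scoped ComplexConjugate

private lemma fourier_sub'' {T : ℝ} [Fact (0 < T)] {m : ℤ} {a b : AddCircle T} :
    fourier m (a - b) = fourier m a * (starRingEnd ℂ) (fourier m b) := by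
  have h : m • (a - b) = m • a + -(m • b) := by rw [smul_sub, sub_eq_add_neg]
  rw [fourier_apply, h, AddCircle.toCircle_add, Circle.coe_mul, ← fourier_apply, fourier_neg']

private lemma hvol' : (volume : Measure UnitAddCircle) = AddCircle.haarAddCircle := by
  rw [AddCircle.volume_eq_smul_haarAddCircle]; simp

private lemma hint' (g : UnitAddCircle → ℝ) (hg : Continuous g) :
    MeasureTheory.Integrable g AddCircle.haarAddCircle :=
  hg.integrable_of_hasCompactSupport ((isClosed_tsupport g).isCompact)

private lemma posdef'
    (f : UnitAddCircle → ℝ) (hf_cont : Continuous f)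
    (hf_mean : (∫ t : UnitAddCircle, f t) = 0)
    (hf_sum : Summable fun k : ℤ => ‖fourierCoeff (fun t => (f t : ℂ)) k‖)
    (hf_pos : ∀ k : ℤ, k ≠ 0 → 0 ≤ (fourierCoeff (fun t => (f t : ℂ)) k).re)
    (s : Finset ℕ) (x : ℕ → UnitAddCircle) :
    0 ≤ ∑ j ∈ s, ∑ k ∈ s, f (x j - x k) := by
  set g : C(UnitAddCircle, ℂ) := ⟨fun t => (f t : ℂ), Complex.continuous_ofReal.comp hf_cont⟩
    with hg
  have hcoeff : ∀ m : ℤ, fourierCoeff (⇑g) m = fourierCoeff (fun t => (f t : ℂ)) m := fun m => rfl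
  have hsum : Summable (fourierCoeff (⇑g)) := by
    apply Summable.of_norm
    simpa only [hcoeff] using hf_sum
  set c : ℤ → ℂ := fourierCoeff (fun t => (f t : ℂ)) with hc
  have hc0 : c 0 = 0 := by
    have h1 : c 0 = ∫ t : UnitAddCircle, (f t : ℂ) ∂AddCircle.haarAddCircle := by
      rw [hc, fourierCoeff]
      simp [fourier_zero]
    have h2 : ∫ t : UnitAddCircle, ((f t : ℝ) : ℂ) ∂AddCircle.haarAddCircle
        = ((∫ t : UnitAddCircle, f t ∂AddCircle.haarAddCircle : ℝ) : ℂ) := integral_ofReal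
    rw [h1, h2, ← hvol', hf_mean]
    simp
  have hpt : ∀ t : UnitAddCircle, HasSum (fun m : ℤ => c m • fourier m t) ((f t : ℂ)) := by
    intro t
    exact has_pointwise_sum_fourier_series_of_summable hsum t
  have hBig : HasSum (fun m : ℤ => ∑ j ∈ s, ∑ k ∈ s, c m • fourier m (x j - x k))
      ((∑ j ∈ s, ∑ k ∈ s, f (x j - x k) : ℝ) : ℂ) := by
    have : ((∑ j ∈ s, ∑ k ∈ s, f (x j - x k) : ℝ) : ℂ)
        = ∑ j ∈ s, ∑ k ∈ s, ((f (x j - x k) : ℝ) : ℂ) := by push_cast; rfl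
    rw [this]
    exact hasSum_sum fun j _ => hasSum_sum fun k _ => hpt (x j - x k)
  have key : ∀ m : ℤ, ∑ j ∈ s, ∑ k ∈ s, c m • fourier m (x j - x k)
      = c m * ((Complex.normSq (∑ j ∈ s, fourier m (x j)) : ℝ) : ℂ) := by
    intro m
    calc ∑ j ∈ s, ∑ k ∈ s, c m • fourier m (x j - x k)
        = ∑ j ∈ s, ∑ k ∈ s, c m * (fourier m (x j) * (starRingEnd ℂ) (fourier m (x k))) := by
          simp_rw [smul_eq_mul, fourier_sub'']
      _ = c m * ((∑ j ∈ s, fourier m (x j)) * (starRingEnd ℂ) (∑ k ∈ s, fourier m (x k))) := by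
          rw [map_sum, Finset.sum_mul_sum, Finset.mul_sum]
          exact Finset.sum_congr rfl fun j _ => (Finset.mul_sum _ _ _).symm
      _ = c m * ((Complex.normSq (∑ j ∈ s, fourier m (x j)) : ℝ) : ℂ) := by
          rw [Complex.mul_conj]
  have hre : HasSum (fun m : ℤ => ((∑ j ∈ s, ∑ k ∈ s, c m • fourier m (x j - x k))).re)
      (∑ j ∈ s, ∑ k ∈ s, f (x j - x k)) := by
    simpa using hBig.mapL Complex.reCLM
  refine hasSum_le (fun m => ?_) hasSum_zero hre
  rw [key m]
  rcases eq_or_ne m 0 with hm | hm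
  · rw [hm, hc0]; simp
  · have h1 : 0 ≤ (c m).re := hf_pos m hm
    have h2 : (0:ℝ) ≤ Complex.normSq (∑ j ∈ s, fourier m (x j)) := Complex.normSq_nonneg _
    simp only [Complex.mul_re, Complex.ofReal_re, Complex.ofReal_im, mul_zero, sub_zero]
    exact mul_nonneg h1 h2

open MeasureTheory Filter

/-- Lemma: For continuous even mean-zero `f : 𝕋 → ℝ` with `f(0) > 0`,
summable Fourier coefficients and `f̂(k) ≥ 0` for `k ≠ 0`, and a greedy sequence `(x_n)`
for `f`, we have `∫₀¹ |∑_{k=1}^{n} f(x − x_k)| dx ≤ 2·f(0)` for infinitely many `n`. -/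
theorem L1_small_infinitely_often
    (f : UnitAddCircle → ℝ) (hf_cont : Continuous f)
    (hf_even : ∀ t : UnitAddCircle, f (-t) = f t)
    (hf_mean : (∫ t : UnitAddCircle, f t) = 0)
    (hf0 : 0 < f 0)
    (hf_sum : Summable fun k : ℤ => ‖fourierCoeff (fun t => (f t : ℂ)) k‖)
    (hf_pos : ∀ k : ℤ, k ≠ 0 → 0 ≤ (fourierCoeff (fun t => (f t : ℂ)) k).re)
    (M : ℕ) (hM : 1 ≤ M) (x : ℕ → UnitAddCircle)
    (hgreedy : ∀ n : ℕ, M < n → ∀ y : UnitAddCircle,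
      ∑ k ∈ Finset.Icc 1 (n - 1), f (x n - x k) ≤ ∑ k ∈ Finset.Icc 1 (n - 1), f (y - x k)) :
    ∃ᶠ n in atTop, (∫ t : UnitAddCircle, |∑ k ∈ Finset.Icc 1 n, f (t - x k)|) ≤ 2 * f 0 := by
  simp only [hvol']
  set μ : Measure UnitAddCircle := AddCircle.haarAddCircle with hμ
  set F : ℕ → UnitAddCircle → ℝ := fun n y => ∑ k ∈ Finset.Icc 1 n, f (y - x k) with hF
  have hFcont : ∀ n, Continuous (F n) := fun n =>
    continuous_finset_sum _ fun k _ => hf_cont.comp (continuous_id.sub continuous_const)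
  have htrans : ∀ a : UnitAddCircle, (∫ t, f (t - a) ∂μ) = 0 := by
    intro a
    rw [integral_sub_right_eq_self f a]
    rw [hμ, ← hvol']; exact hf_mean
  have hFmean : ∀ n, (∫ t, F n t ∂μ) = 0 := by
    intro n
    show (∫ t, (∑ k ∈ Finset.Icc 1 n, f (t - x k)) ∂μ) = 0
    rw [integral_finset_sum (Finset.Icc 1 n) (fun k _ =>
      hint' (fun t => f (t - x k)) (hf_cont.comp (continuous_id.sub continuous_const)))]
    exact Finset.sum_eq_zero fun k _ => htrans (x k)
  -- the greedy min is ≤ 0 and bounds the L¹ norm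
  have hbound : ∀ n, M ≤ n → (∫ t, |F n t| ∂μ) ≤ -(2 * F n (x (n + 1))) := by
    intro n hn
    have hg : ∀ y, F n (x (n + 1)) ≤ F n y := by
      intro y
      have := hgreedy (n + 1) (by omega) y
      simpa [hF] using this
    have hm0 : F n (x (n + 1)) ≤ 0 := by
      have h1 : (∫ _ : UnitAddCircle, F n (x (n + 1)) ∂μ) ≤ ∫ t, F n t ∂μ :=
        integral_mono (integrable_const _) (hint' _ (hFcont n)) hg
      rw [hFmean n] at h1
      simpa using h1
    have hpt : ∀ t, |F n t| ≤ F n t - 2 * F n (x (n + 1)) := by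
      intro t
      rcases le_or_gt 0 (F n t) with h | h
      · rw [_root_.abs_of_nonneg h]; linarith [hg t]
      · rw [_root_.abs_of_neg h]; linarith [hg t]
    calc (∫ t, |F n t| ∂μ) ≤ ∫ t, (F n t - 2 * F n (x (n + 1))) ∂μ :=
          integral_mono (hint' _ (hFcont n).abs)
            ((hint' _ (hFcont n)).sub (integrable_const _)) hpt
      _ = -(2 * F n (x (n + 1))) := by
          rw [integral_sub (hint' _ (hFcont n)) (integrable_const _), hFmean n]
          simp
  -- energy
  set E : ℕ → ℝ := fun n => ∑ j ∈ Finset.Icc 1 n, ∑ k ∈ Finset.Icc 1 n, f (x j - x k) with hE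
  have hE0 : ∀ n, 0 ≤ E n := fun n => posdef' f hf_cont hf_mean hf_sum hf_pos _ x
  have hsub : ∀ a b : UnitAddCircle, f (a - b) = f (b - a) := by
    intro a b; rw [← hf_even (b - a), neg_sub]
  have hrec : ∀ n, E (n + 1) = E n + 2 * F n (x (n + 1)) + f 0 := by
    intro n
    have hins : Finset.Icc 1 (n + 1) = insert (n + 1) (Finset.Icc 1 n) := by
      rw [← Finset.insert_Icc_right_eq_Icc_add_one (by omega)]
    have hnot : (n + 1) ∉ Finset.Icc 1 n := by simp
    rw [hE]
    simp only [hins, Finset.sum_insert hnot]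
    rw [Finset.sum_add_distrib]
    have h1 : ∑ j ∈ Finset.Icc 1 n, f (x j - x (n + 1)) = F n (x (n + 1)) := by
      rw [hF]; exact Finset.sum_congr rfl fun j _ => hsub _ _
    rw [h1, sub_self]
    have h2 : ∑ k ∈ Finset.Icc 1 n, f (x (n + 1) - x k) = F n (x (n + 1)) := rfl
    rw [h2]
    ring
  -- contradiction
  by_contra hcon
  rw [Filter.not_frequently] at hcon
  obtain ⟨N, hN⟩ := eventually_atTop.mp hcon
  set K := max M N with hK
  have hstep : ∀ n, K ≤ n → F n (x (n + 1)) < -f 0 := by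
    intro n hn
    have h1 : ¬(∫ t, |F n t| ∂μ) ≤ 2 * f 0 := hN n (le_trans (le_max_right M N) hn)
    have h2 := hbound n (le_trans (le_max_left M N) hn)
    push_neg at h1
    linarith
  have hdesc : ∀ j : ℕ, E (K + j) ≤ E K - j * f 0 := by
    intro j
    induction j with
    | zero => simp
    | succ j ih =>
      have h1 := hrec (K + j)
      have h2 := hstep (K + j) (by omega)
      have : E (K + j + 1) ≤ E (K + j) - f 0 := by rw [h1]; linarith
      push_cast
      calc E (K + (j + 1)) = E (K + j + 1) := by ring_nf
        _ ≤ E (K + j) - f 0 := this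
        _ ≤ E K - j * f 0 - f 0 := by linarith
        _ = E K - ((j : ℝ) + 1) * f 0 := by ring
  set j : ℕ := ⌈E K / f 0⌉₊ + 1 with hj
  have hjb : E K < j * f 0 := by
    have h1 : E K / f 0 ≤ (⌈E K / f 0⌉₊ : ℝ) := Nat.le_ceil _
    have h2 : (⌈E K / f 0⌉₊ : ℝ) < j := by rw [hj]; push_cast; linarith
    have := (div_lt_iff₀ hf0).mp (lt_of_le_of_lt h1 h2)
    exact this
  have := hdesc j
  have := hE0 (K + j)
  linarith
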